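/- Let C be a rank-nondegenerate [n,k]_{q^m/q} code with generator matrix G, and let 𝒰 ⊆ F_{q^m}^k be the F_q-span of the columns of G. Then for every nonzero v ∈ F_{q^m}^k, rk(vG) = n - dim_{F_q}(𝒰 ∩ ⟨v⟩^⊥), where ⟨v⟩^⊥ = {u ∈ F_{q^m}^k : u·v^T = 0}. -/

import Mathlib

open Module Submodule

/-- The rank support of a vector `v ∈ L^n` over the subfield `K`: the `K`-span of the
rows of the expansion matrix, i.e. the space of all `(φ (v 1), ..., φ (v n))` for
`K`-linear functionals `φ : L → K`. -/
noncomputable def rkSupport (K : Type) {L : Type} [Field K] [Field L] [Algebra K L]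
    {n : ℕ} (v : Fin n → L) : Submodule K (Fin n → K) :=
  LinearMap.range (LinearMap.pi (fun i => LinearMap.applyₗ (v i) :
    Fin n → Module.Dual K L →ₗ[K] K))


/-- The linear functional `u ↦ ∑ i, u i * v i` on `L^k`. -/
def dotLin {L : Type} [Field L] {k : ℕ} (v : Fin k → L) : (Fin k → L) →ₗ[L] L where
  toFun u := ∑ i, u i * v i
  map_add' u w := by simp [add_mul, Finset.sum_add_distrib]
  map_smul' a u := by simp [Finset.mul_sum, mul_assoc]

lemma finrank_rkSupport {K L : Type} [Field K] [Field L] [Algebra K L]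
    {n : ℕ} (w : Fin n → L) :
    Module.finrank K (rkSupport K w) =
      Module.finrank K (Submodule.span K (Set.range w)) := by
  classical
  set W := Submodule.span K (Set.range w) with hWdef
  have hmem : ∀ i, w i ∈ W := fun i => Submodule.subset_span ⟨i, rfl⟩
  set g : Fin n → W := fun i => ⟨w i, hmem i⟩ with hg
  set e' : Module.Dual K W →ₗ[K] (Fin n → K) :=
    LinearMap.pi (fun i => LinearMap.applyₗ (g i)) with he'
  have hspan : Submodule.span K (Set.range g) = ⊤ := by
    apply Submodule.map_injective_of_injective W.injective_subtype
    rw [Submodule.map_span, ← Set.range_comp, Submodule.map_subtype_top]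
    exact (hWdef ▸ rfl : Submodule.span K (Set.range w) = W)
  have hinj : Function.Injective e' := by
    rw [← LinearMap.ker_eq_bot, LinearMap.ker_eq_bot']
    intro ψ hψ
    have hz : ∀ i, ψ (g i) = 0 := fun i => congrFun hψ i
    refine LinearMap.ext_on hspan ?_
    rintro x ⟨i, rfl⟩
    simpa using hz i
  have hrange : rkSupport K w = LinearMap.range e' := by
    apply le_antisymm
    · rintro x ⟨φ, rfl⟩
      exact ⟨φ.comp W.subtype, rfl⟩
    · rintro x ⟨ψ, rfl⟩
      obtain ⟨φ, hφ⟩ := LinearMap.exists_extend ψ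
      refine ⟨φ, ?_⟩
      funext i
      have := congrFun (congrArg (fun h => h.toFun) hφ) (g i)
      simpa [rkSupport, hg, he'] using this
  haveI : FiniteDimensional K W := FiniteDimensional.span_of_finite K (Set.finite_range w)
  rw [hrange, LinearMap.finrank_range_of_inj hinj, Subspace.dual_finrank_eq]

theorem stmt_5 {K L : Type} [Field K] [Field L] [Algebra K L] {n k : ℕ}
    (C : Submodule L (Fin n → L)) (G : Matrix (Fin k) (Fin n) L)
    (hG : C = Submodule.span L (Set.range G))
    (hk : Module.finrank L C = k)
    (U : Submodule K (Fin k → L))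
    (hU : U = Submodule.span K (Set.range G.transpose))
    (hnd : Module.finrank K U = n)
    (v : Fin k → L) (hv : v ≠ 0) :
    Module.finrank K (rkSupport K (Matrix.vecMul v G)) =
      n - Module.finrank K ↥((LinearMap.ker (dotLin v)).restrictScalars K ⊓ U) := by
  rcases Nat.eq_zero_or_pos n with hn | hn
  · subst hn
    have : Subsingleton (rkSupport K (Matrix.vecMul v G)) := by
      constructor; intro a b; ext i; exact absurd i.2 (Nat.not_lt_zero _)
    rw [Module.finrank_zero_of_subsingleton, Nat.zero_sub]
  · have hfd : FiniteDimensional K U := FiniteDimensional.of_finrank_pos (hnd ▸ hn)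
    set f : (Fin k → L) →ₗ[K] L := (dotLin v).restrictScalars K with hf
    have hW : Submodule.span K (Set.range (Matrix.vecMul v G)) = U.map f := by
      have hc : ⇑f ∘ G.transpose = Matrix.vecMul v G := by
        funext j
        simp [f, dotLin, Matrix.vecMul, dotProduct, Matrix.transpose, mul_comm, Function.comp_apply, Matrix.of_apply]
        exact Finset.sum_congr rfl (fun x _ => mul_comm _ _)
      rw [hU, Submodule.map_span, ← hc]; exact congrArg _ (Set.range_comp _ _)
    rw [finrank_rkSupport, hW]
    have hrn := LinearMap.finrank_range_add_finrank_ker (f.domRestrict U)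
    rw [LinearMap.range_domRestrict, LinearMap.ker_domRestrict, hnd] at hrn
    have hker : Module.finrank K ((LinearMap.ker f).comap U.subtype) =
        Module.finrank K ↥((LinearMap.ker (dotLin v)).restrictScalars K ⊓ U) := by
      have h1 : LinearMap.ker f = (LinearMap.ker (dotLin v)).restrictScalars K :=
        by rfl
      have h2 : (LinearMap.ker f).comap U.subtype =
          (LinearMap.ker f ⊓ U).comap U.subtype := by
        rw [Submodule.comap_inf, Submodule.comap_subtype_self, inf_top_eq]
      rw [h2, h1]
      exact (Submodule.comapSubtypeEquivOfLe inf_le_right).finrank_eq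
    omega
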